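/- Let G = (V,D,B) be an acyclic mixed graph, let v ∈ V, and suppose Y ⊆ V satisfies the half-trek criterion with respect to v in G. Let V' ⊆ V be any ancestral subset with {v} ∪ Y ⊆ V'. Then Y satisfies the half-trek criterion with respect to v in the induced subgraph G_{V'}. -/

import Mathlib

open scoped Classical Matrix

/-- The directed part of the graph contains no directed cycle. -/
def Acyclic {n : ℕ} (D : Finset (Fin n × Fin n)) : Prop :=
  ∀ v : Fin n, ¬ Relation.TransGen (fun a b => (a, b) ∈ D) v v

/-- Mixed graph axioms: the bidirected edge set is symmetric and there are no self loops. -/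
def IsMixedGraph {n : ℕ} (D B : Finset (Fin n × Fin n)) : Prop :=
  (∀ v w : Fin n, (v, w) ∈ B → (w, v) ∈ B) ∧ ∀ v : Fin n, (v, v) ∉ D ∧ (v, v) ∉ B

/-- `IsTrek D B v w L R`: `L` is the left side of a trek from `v` to `w`, listed from the top
node down to the source `v` (consecutive vertices joined by directed edges pointing towards
`v`); `R` is the right side, listed from the top down to the target `w`.  Either the two tops
coincide (no bidirected edge) or they are joined by a bidirected edge. -/
def IsTrek {n : ℕ} (D B : Finset (Fin n × Fin n)) (v w : Fin n)
    (L R : List (Fin n)) : Prop :=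
  L ≠ [] ∧ R ≠ [] ∧
    L.Chain' (fun a b => (a, b) ∈ D) ∧ R.Chain' (fun a b => (a, b) ∈ D) ∧
    L.getLast? = some v ∧ R.getLast? = some w ∧
    (L.head? = R.head? ∨
      ∃ u z : Fin n, L.head? = some u ∧ R.head? = some z ∧ (u, z) ∈ B)

/-- Product of the matrix entries `Λ x y` over the consecutive pairs `(x, y)` of a list,
i.e. the product of the directed-edge coefficients along a directed path. -/
noncomputable def edgeProd {n : ℕ} (Λ : Matrix (Fin n) (Fin n) ℝ) :
    List (Fin n) → ℝ
  | [] => 1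
  | [_] => 1
  | x :: y :: rest => Λ x y * edgeProd Λ (y :: rest)

/-- The trek monomial of the trek with sides `L`, `R`. -/
noncomputable def trekWeight {n : ℕ} (Λ Ω : Matrix (Fin n) (Fin n) ℝ)
    (L R : List (Fin n)) : ℝ :=
  (match L.head?, R.head? with
    | some u, some z => Ω u z
    | _, _ => 0) * edgeProd Λ L * edgeProd Λ R

/-- `u` is an ancestor of `v`: there is a (possibly empty) directed path from `u` to `v`. -/
def IsAncestor {n : ℕ} (D : Finset (Fin n × Fin n)) (u v : Fin n) : Prop :=
  Relation.ReflTransGen (fun a b => (a, b) ∈ D) u v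

/-- `V'` is an ancestral subset: it contains all ancestors of its members. -/
def Ancestral {n : ℕ} (D : Finset (Fin n × Fin n)) (V' : Finset (Fin n)) : Prop :=
  ∀ u v : Fin n, IsAncestor D u v → v ∈ V' → u ∈ V'

/-- The parents of `v`. -/
def paF {n : ℕ} (D : Finset (Fin n × Fin n)) (v : Fin n) : Finset (Fin n) :=
  Finset.univ.filter fun w => (w, v) ∈ D

/-- `htr D B v`: the set of vertices `w ∉ {v} ∪ sib(v)` reachable from `v` by a half-trek. -/
def htr {n : ℕ} (D B : Finset (Fin n × Fin n)) (v : Fin n) : Set (Fin n) :=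
  {w | w ≠ v ∧ (v, w) ∉ B ∧ ∃ R, IsTrek D B v w [v] R}

/-- `Y` satisfies the half-trek criterion with respect to `v`: `|Y| = |pa(v)|`,
`Y ∩ ({v} ∪ sib(v)) = ∅`, and there is a system of half-treks with no sided intersection
from `Y` to `pa(v)` (given by a source `src p ∈ Y` and a right side `R p` for each parent
`p`, with pairwise distinct sources and pairwise disjoint right sides). -/
def SatisfiesHTC {n : ℕ} (D B : Finset (Fin n × Fin n)) (v : Fin n)
    (Y : Finset (Fin n)) : Prop :=
  Y.card = (paF D v).card ∧
    (∀ y ∈ Y, y ≠ v ∧ (y, v) ∉ B) ∧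
    ∃ (src : Fin n → Fin n) (R : Fin n → List (Fin n)),
      (∀ p ∈ paF D v, src p ∈ Y ∧ IsTrek D B (src p) p [src p] (R p)) ∧
      ∀ p ∈ paF D v, ∀ q ∈ paF D v, p ≠ q →
        src p ≠ src q ∧ ∀ x ∈ R p, x ∉ R q

/-- The parameter space `Θ = ℝ^D × PD(B)`. -/
def Theta {α : Type} [Fintype α] (D B : Set (α × α)) :
    Set (Matrix α α ℝ × Matrix α α ℝ) :=
  {p : Matrix α α ℝ × Matrix α α ℝ |
    (∀ v w : α, p.1 v w ≠ 0 → (v, w) ∈ D) ∧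
      p.2.PosDef ∧ ∀ v w : α, v ≠ w → p.2 v w ≠ 0 → (v, w) ∈ B}

/-- The parameterization map `φ(Λ, Ω) = (I - Λ)⁻ᵀ Ω (I - Λ)⁻¹`. -/
noncomputable def phi {α : Type} [Fintype α] [DecidableEq α]
    (p : Matrix α α ℝ × Matrix α α ℝ) : Matrix α α ℝ :=
  ((1 - p.1)⁻¹)ᵀ * p.2 * (1 - p.1)⁻¹

/-- Evaluation of a polynomial in the entries of the two parameter matrices. -/
noncomputable def polyEval {α : Type} [Fintype α]
    (f : MvPolynomial ((α × α) ⊕ (α × α)) ℝ)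
    (p : Matrix α α ℝ × Matrix α α ℝ) : ℝ :=
  MvPolynomial.eval (Sum.elim (fun e => p.1 e.1 e.2) (fun e => p.2 e.1 e.2)) f

/-- `A` is a proper algebraic subset of `Θ`: the intersection of `Θ` with the zero set of a
polynomial in the matrix entries that does not vanish identically on `Θ`. -/
def IsProperAlg {α : Type} [Fintype α]
    (Θ A : Set (Matrix α α ℝ × Matrix α α ℝ)) : Prop :=
  ∃ f : MvPolynomial ((α × α) ⊕ (α × α)) ℝ,
    (∃ p ∈ Θ, polyEval f p ≠ 0) ∧ A = {p ∈ Θ | polyEval f p = 0}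

/-- Generic identifiability: `φ` is injective off a proper algebraic subset. -/
def GenId {α : Type} [Fintype α] [DecidableEq α] (D B : Set (α × α)) : Prop :=
  ∃ A, IsProperAlg (Theta D B) A ∧
    ∀ p ∈ Theta D B \ A, ∀ q ∈ Theta D B \ A, phi p = phi q → p = q

/-- Generic identifiability of the single coefficient `λ_{uv}`. -/
def GenIdLambda {α : Type} [Fintype α] [DecidableEq α] (D B : Set (α × α))
    (u v : α) : Prop :=
  ∃ A, IsProperAlg (Theta D B) A ∧
    ∀ p ∈ Theta D B \ A, ∀ q ∈ Theta D B \ A, phi p = phi q → p.1 u v = q.1 u v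

/-- Generic identifiability of the single coefficient `ω_{uv}`. -/
def GenIdOmega {α : Type} [Fintype α] [DecidableEq α] (D B : Set (α × α))
    (u v : α) : Prop :=
  ∃ A, IsProperAlg (Theta D B) A ∧
    ∀ p ∈ Theta D B \ A, ∀ q ∈ Theta D B \ A, phi p = phi q → p.2 u v = q.2 u v

/-- Generic identifiability of the coefficient vector `Λ_{pa(v), v}`. -/
def GenIdCol {α : Type} [Fintype α] [DecidableEq α] (D B : Set (α × α))
    (v : α) : Prop :=
  ∃ A, IsProperAlg (Theta D B) A ∧
    ∀ p ∈ Theta D B \ A, ∀ q ∈ Theta D B \ A, phi p = phi q →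
      ∀ u : α, (u, v) ∈ D → p.1 u v = q.1 u v

/-- The fiber of the parameter point `p` within `Θ`. -/
def fiber {α : Type} [Fintype α] [DecidableEq α] (D B : Set (α × α))
    (p : Matrix α α ℝ × Matrix α α ℝ) :
    Set (Matrix α α ℝ × Matrix α α ℝ) :=
  {q ∈ Theta D B | phi q = phi p}

/-- Generically infinite-to-one. -/
def GenInfToOne {α : Type} [Fintype α] [DecidableEq α] (D B : Set (α × α)) : Prop :=
  ∃ A, IsProperAlg (Theta D B) A ∧
    ∀ p ∈ Theta D B \ A, (fiber D B p).Infinite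

/-- Generically `h`-to-one: every fiber off a proper algebraic subset has exactly `h` points. -/
def GenHToOne {α : Type} [Fintype α] [DecidableEq α] (D B : Set (α × α))
    (h : ℕ) : Prop :=
  ∃ A, IsProperAlg (Theta D B) A ∧
    ∀ p ∈ Theta D B \ A, (fiber D B p).Finite ∧ (fiber D B p).ncard = h

/-- `w` lies in the connected component of `c` in the bidirected part `(V, B)`. -/
def bidirConn {n : ℕ} (B : Finset (Fin n × Fin n)) (c w : Fin n) : Prop :=
  Relation.ReflTransGen (fun a b => (a, b) ∈ B) c w

/-- The connected component `C` of `c` in the bidirected part. -/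
noncomputable def Cset {n : ℕ} (B : Finset (Fin n × Fin n)) (c : Fin n) :
    Finset (Fin n) :=
  Finset.univ.filter (bidirConn B c)

/-- The vertex set `V_i = C_i ∪ pa(C_i)` of the mixed component of `c`. -/
noncomputable def Vset {n : ℕ} (D B : Finset (Fin n × Fin n)) (c : Fin n) :
    Finset (Fin n) :=
  Cset B c ∪ Finset.univ.filter fun v => ∃ w ∈ Cset B c, (v, w) ∈ D

/-- The directed edges `D_i = {(v, w) ∈ D : v ∈ V_i, w ∈ C_i}` of the mixed component of `c`. -/
def compD {n : ℕ} (D B : Finset (Fin n × Fin n)) (c : Fin n) :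
    Set (↥(Vset D B c) × ↥(Vset D B c)) :=
  {e | ((e.1 : Fin n), (e.2 : Fin n)) ∈ D ∧ (e.2 : Fin n) ∈ Cset B c}

/-- The bidirected edges `B_i = {(v, w) ∈ B : v, w ∈ C_i}` of the mixed component of `c`. -/
def compB {n : ℕ} (D B : Finset (Fin n × Fin n)) (c : Fin n) :
    Set (↥(Vset D B c) × ↥(Vset D B c)) :=
  {e | ((e.1 : Fin n), (e.2 : Fin n)) ∈ B ∧ (e.1 : Fin n) ∈ Cset B c ∧
    (e.2 : Fin n) ∈ Cset B c}

/-- The edges of the induced subgraph `G_{V'}`, as pairs of vertices of the subtype `V'`. -/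
def inducedE {n : ℕ} (E : Finset (Fin n × Fin n)) (V' : Finset (Fin n)) :
    Set (↥V' × ↥V') :=
  {e | ((e.1 : Fin n), (e.2 : Fin n)) ∈ E}

/-- Every element of a chain ending at `p` reaches `p` via `ReflTransGen`. -/
lemma chain_last_reach {α : Type*} {r : α → α → Prop} :
    ∀ L : List α, L.Chain' r → ∀ p, L.getLast? = some p →
      ∀ x ∈ L, Relation.ReflTransGen r x p := by
  intro L
  induction L with
  | nil => simp
  | cons a L ih =>
    intro hc p hlast x hx
    cases L with
    | nil =>
      simp at hlast hx
      subst hlast; subst hx; exact Relation.ReflTransGen.refl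
    | cons b L' =>
      rw [List.Chain', List.isChain_cons_cons] at hc
      have hlast' : (b :: L').getLast? = some p := by
        simpa [List.getLast?_cons_cons] using hlast
      rcases List.mem_cons.mp hx with rfl | hx'
      · exact Relation.ReflTransGen.head hc.1
          (ih hc.2 p hlast' b List.mem_cons_self)
      · exact ih hc.2 p hlast' x hx'

/-- Monotonicity of `Chain'` under a relation implication valid on members. -/
lemma chain'_mono_mem {α : Type*} {r s : α → α → Prop} :
    ∀ L : List α, L.Chain' r → (∀ a ∈ L, ∀ b ∈ L, r a b → s a b) → L.Chain' s := by
  intro L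
  induction L with
  | nil => simp [List.Chain']
  | cons a L ih =>
    intro hc h
    cases L with
    | nil => simp [List.Chain']
    | cons b L' =>
      rw [List.Chain', List.isChain_cons_cons] at hc ⊢
      exact ⟨h a (by simp) b (by simp) hc.1,
        ih hc.2 fun x hx y hy => h x (by simp [hx]) y (by simp [hy])⟩

theorem stmt13 (n : ℕ) (D B : Finset (Fin n × Fin n))
    (hG : IsMixedGraph D B) (hacyc : Acyclic D)
    (v : Fin n) (Y : Finset (Fin n)) (hY : SatisfiesHTC D B v Y)
    (V' : Finset (Fin n)) (hanc : Ancestral D V')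
    (hv : v ∈ V') (hYsub : ∀ y ∈ Y, y ∈ V') :
    SatisfiesHTC (D.filter fun e => e.1 ∈ V' ∧ e.2 ∈ V')
      (B.filter fun e => e.1 ∈ V' ∧ e.2 ∈ V') v Y := by
  obtain ⟨hcard, hYv, src, R, htrek, hdisj⟩ := hY
  set D' := D.filter fun e : Fin n × Fin n => e.1 ∈ V' ∧ e.2 ∈ V' with hD'
  set B' := B.filter fun e : Fin n × Fin n => e.1 ∈ V' ∧ e.2 ∈ V' with hB'
  have hpa : paF D' v = paF D v := by
    ext w
    simp only [paF, Finset.mem_filter, Finset.mem_univ, true_and, hD']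
    constructor
    · rintro ⟨h, -⟩; exact h
    · intro h
      exact ⟨h, hanc w v (Relation.ReflTransGen.single h) hv, hv⟩
  refine ⟨by rw [hpa]; exact hcard, ?_, src, R, ?_, ?_⟩
  · intro y hy
    refine ⟨(hYv y hy).1, ?_⟩
    intro hmem
    exact (hYv y hy).2 (Finset.mem_filter.mp hmem).1
  · intro p hp
    rw [hpa] at hp
    obtain ⟨hsrc, hL, hR, hcL, hcR, hlastL, hlastR, htop⟩ := htrek p hp
    have hpV' : p ∈ V' :=
      hanc p v (Relation.ReflTransGen.single (Finset.mem_filter.mp hp).2) hv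
    -- every element of R p is in V'
    have hRmem : ∀ x ∈ R p, x ∈ V' := fun x hx =>
      hanc x p (chain_last_reach (R p) hcR p hlastR x hx) hpV'
    have hsrcV' : src p ∈ V' := hYsub (src p) hsrc
    refine ⟨hsrc, hL, hR, ?_, ?_, hlastL, hlastR, ?_⟩
    · -- chain' for [src p] is trivial
      simp [List.Chain']
    · -- chain' of R p in D'
      exact chain'_mono_mem (R p) hcR fun a ha b hb hab =>
        Finset.mem_filter.mpr ⟨hab, hRmem a ha, hRmem b hb⟩
    · rcases htop with heq | ⟨u, z, hu, hz, hB⟩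
      · exact Or.inl heq
      · refine Or.inr ⟨u, z, hu, hz, Finset.mem_filter.mpr ⟨hB, ?_, ?_⟩⟩
        · have : u = src p := by
            have := hu; simp [List.head?] at this
            -- L = [src p], so head? = some (src p)
            exact this.symm
          subst this; exact hsrcV'
        · exact hRmem z (List.mem_of_mem_head? hz)
  · intro p hp q hq hpq
    rw [hpa] at hp hq
    exact hdisj p hp q hq hpq
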